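/- Let A be a sequence of n records partitioned into m subarrays of length l = n/m, and let bucket : record → Fin B assign each record a bucket. Define C[i][j] as the number of records in subarray i with bucket j, and X[i][j] = Σ over pairs (i',j') with j' < j, or (j' = j and i' < i), of C[i'][j']. Then the map sending the r-th record of bucket j within subarray i (0-indexed, in subarray order) to position X[i][j] + r is a bijection from the n records to positions {0, …, n−1}. -/

import Mathlib

/-- Correctness of the blocked distributing step: with `n = m * l` records split
into `m` subarrays of length `l`, a bucket assignment `bucket`, the counting
matrix `C` and its column-major prefix sum `X`, the map sending the `r`-th
record (in subarray order) of bucket `j` within subarray `i` to position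
`X i j + r` is a bijection from the `n` records onto positions `{0, …, n-1}`. -/
theorem blocked_distributing_bijective (n m l B : ℕ) (hn : n = m * l)
    (bucket : Fin n → ℕ) (hB : ∀ p, bucket p < B)
    (C X : ℕ → ℕ → ℕ)
    (hC : ∀ i j, C i j =
      ((Finset.univ : Finset (Fin n)).filter
        (fun p : Fin n => (p : ℕ) / l = i ∧ bucket p = j)).card)
    (hX : ∀ i j, X i j =
      ∑ q ∈ (Finset.range m ×ˢ Finset.range B).filter
        (fun q => q.2 < j ∨ (q.2 = j ∧ q.1 < i)), C q.1 q.2) :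
    Set.BijOn
      (fun p : Fin n =>
        X ((p : ℕ) / l) (bucket p) +
          ((Finset.univ : Finset (Fin n)).filter
            (fun q : Fin n => (q : ℕ) / l = (p : ℕ) / l ∧ bucket q = bucket p ∧
              (q : ℕ) < (p : ℕ))).card)
      Set.univ (Set.Iio n) := by
  classical
  rcases Nat.eq_zero_or_pos l with hl | hl
  · subst hl
    rw [Nat.mul_zero] at hn
    subst hn
    refine ⟨fun p _ => p.elim0, fun p _ => p.elim0, fun x hx => absurd hx (by simp)⟩
  have hdivlt : ∀ p : Fin n, (p : ℕ) / l < m := fun p =>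
    (Nat.div_lt_iff_lt_mul hl).mpr (hn ▸ p.isLt)
  -- the rank function under the lexicographic order on (bucket p, p)
  set g : Fin n → ℕ := fun p =>
    (Finset.univ.filter (fun q : Fin n =>
      bucket q < bucket p ∨ (bucket q = bucket p ∧ (q : ℕ) < (p : ℕ)))).card with hg
  have hf : ∀ p : Fin n,
      X ((p : ℕ) / l) (bucket p) +
        ((Finset.univ : Finset (Fin n)).filter
          (fun q : Fin n => (q : ℕ) / l = (p : ℕ) / l ∧ bucket q = bucket p ∧
            (q : ℕ) < (p : ℕ))).card = g p := by
    intro p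
    have hXcard : X ((p : ℕ) / l) (bucket p) =
        (Finset.univ.filter (fun q : Fin n =>
          bucket q < bucket p ∨ (bucket q = bucket p ∧ (q : ℕ) / l < (p : ℕ) / l))).card := by
      rw [hX]
      rw [Finset.card_eq_sum_card_fiberwise
        (f := fun q : Fin n => ((q : ℕ) / l, bucket q))
        (t := (Finset.range m ×ˢ Finset.range B).filter
          (fun q => q.2 < bucket p ∨ (q.2 = bucket p ∧ q.1 < (p : ℕ) / l)))]
      · apply Finset.sum_congr rfl
        intro b hb
        rw [hC]
        congr 1
        ext q
        simp only [Finset.mem_filter, Finset.mem_univ, true_and, Prod.ext_iff,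
          Finset.mem_product, Finset.mem_range] at hb ⊢
        constructor
        · rintro ⟨h1, h2⟩
          refine ⟨?_, h1, h2⟩
          rw [← h1, ← h2] at hb
          exact hb.2
        · rintro ⟨_, h⟩
          exact h
      · intro q hq
        simp only [Finset.mem_coe, Finset.mem_filter, Finset.mem_univ, true_and,
          Finset.mem_product, Finset.mem_range] at hq ⊢
        exact ⟨⟨hdivlt q, hB q⟩, hq⟩
    rw [hXcard, hg]
    rw [← Finset.card_union_of_disjoint]
    · congr 1
      ext q
      simp only [Finset.mem_union, Finset.mem_filter, Finset.mem_univ, true_and]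
      have h1 : (q : ℕ) / l < (p : ℕ) / l → (q : ℕ) < (p : ℕ) :=
        Nat.lt_of_div_lt_div
      have h2 : (q : ℕ) < (p : ℕ) → (q : ℕ) / l ≤ (p : ℕ) / l := fun h =>
        Nat.div_le_div_right h.le
      omega
    · rw [Finset.disjoint_filter]
      intro q _ hP hR
      omega
  have hLtc : ∀ p p' : Fin n,
      (bucket p < bucket p' ∨ (bucket p = bucket p' ∧ (p : ℕ) < (p' : ℕ))) →
      g p < g p' := by
    intro p p' hlt
    apply Finset.card_lt_card
    constructor
    · intro q hq
      simp only [Finset.mem_filter, Finset.mem_univ, true_and] at hq ⊢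
      rcases hq with h | ⟨he, hv⟩ <;> rcases hlt with h' | ⟨he', hv'⟩ <;> omega
    · intro hsub
      have hp : p ∈ Finset.univ.filter (fun q : Fin n =>
          bucket q < bucket p' ∨ (bucket q = bucket p' ∧ (q : ℕ) < (p' : ℕ))) := by
        simp only [Finset.mem_filter, Finset.mem_univ, true_and]
        exact hlt
      have := hsub hp
      simp only [Finset.mem_filter, Finset.mem_univ, true_and] at this
      omega
  have hinj : Function.Injective g := by
    intro p p' h
    by_contra hne
    have : bucket p < bucket p' ∨ (bucket p = bucket p' ∧ (p : ℕ) < (p' : ℕ)) ∨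
        bucket p' < bucket p ∨ (bucket p' = bucket p ∧ (p' : ℕ) < (p : ℕ)) := by
      have hv : (p : ℕ) ≠ (p' : ℕ) := fun hv => hne (Fin.ext hv)
      omega
    rcases this with h1 | h1 | h1 | h1
    · exact absurd h (Nat.ne_of_lt (hLtc p p' (Or.inl h1)))
    · exact absurd h (Nat.ne_of_lt (hLtc p p' (Or.inr h1)))
    · exact absurd h.symm (Nat.ne_of_lt (hLtc p' p (Or.inl h1)))
    · exact absurd h.symm (Nat.ne_of_lt (hLtc p' p (Or.inr h1)))
  have hmt : ∀ p : Fin n, g p < n := by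
    intro p
    have hsub : Finset.univ.filter (fun q : Fin n =>
        bucket q < bucket p ∨ (bucket q = bucket p ∧ (q : ℕ) < (p : ℕ)))
        ⊆ Finset.univ.erase p := by
      intro q hq
      simp only [Finset.mem_filter, Finset.mem_univ, true_and] at hq
      refine Finset.mem_erase.mpr ⟨fun he => ?_, Finset.mem_univ q⟩
      subst he
      omega
    calc g p ≤ (Finset.univ.erase p).card := Finset.card_le_card hsub
      _ < Finset.univ.card := Finset.card_erase_lt_of_mem (Finset.mem_univ p)
      _ = n := by simp
  have himg : Finset.image g Finset.univ = Finset.range n := by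
    apply Finset.eq_of_subset_of_card_le
    · intro x hx
      simp only [Finset.mem_image, Finset.mem_univ, true_and] at hx
      rcases hx with ⟨p, rfl⟩
      exact Finset.mem_range.mpr (hmt p)
    · rw [Finset.card_range, Finset.card_image_of_injective _ hinj]
      simp
  refine ⟨fun p _ => ?_, fun p _ p' _ h => ?_, fun x hx => ?_⟩
  · simp only [Set.mem_Iio]
    rw [hf p]
    exact hmt p
  · apply hinj
    rw [← hf p, ← hf p']
    exact h
  · have : x ∈ Finset.range n := Finset.mem_range.mpr hx
    rw [← himg] at this
    simp only [Finset.mem_image, Finset.mem_univ, true_and] at this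
    rcases this with ⟨p, hp⟩
    exact ⟨p, Set.mem_univ p, (hf p).trans hp⟩
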